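/- Let A = ⊕_{n ∈ ℤ} A_n be a ℤ-graded algebra equipped with an involution * satisfying A_n* = A_{−n} for every integer n. Let Z = Z(A) be the center of A with induced grading Z = ⊕_n Z_n where Z_n = Z ∩ A_n. Suppose Z is a domain and Z_0 is a field. Then every nonzero homogeneous component Z_n is isomorphic to Z_0 as a Z_0-vector space, and either Z = Z_0 or Z is isomorphic as a graded Z_0-algebra to the Laurent polynomial algebra Z_0[x, x^{−1}]. -/

import Mathlib

open DirectSum

section Aux

variable {K A : Type} [Field K] [Ring A] [Algebra K A]
  (𝒜 : ℤ → Submodule K A) [GradedAlgebra 𝒜]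

/-- Homogeneous components of a central element are central. -/
lemma aux_comp_central {z : A} (hz : z ∈ Subalgebra.center K A) (n : ℤ) :
    (DirectSum.decompose 𝒜 z n : A) ∈ Subalgebra.center K A := by
  rw [Subalgebra.mem_center_iff] at hz ⊢
  intro a
  induction a using DirectSum.Decomposition.inductionOn 𝒜 with
  | zero => simp
  | homogeneous m =>
      rename_i i
      have h1 : (DirectSum.decompose 𝒜 ((m : A) * z) (i + n) : A)
          = (m : A) * DirectSum.decompose 𝒜 z n :=
        DirectSum.coe_decompose_mul_add_of_left_mem 𝒜 m.2
      have h2 : (DirectSum.decompose 𝒜 (z * (m : A)) (n + i) : A)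
          = (DirectSum.decompose 𝒜 z n : A) * m :=
        DirectSum.coe_decompose_mul_add_of_right_mem 𝒜 m.2
      rw [hz (m : A)] at h1
      rw [← h1, ← h2, add_comm]
  | add a b ha hb => rw [add_mul, mul_add, ha, hb]

/-- `star` preserves the center. -/
lemma aux_star_central (star : A →ₗ[K] A)
    (hstar_mul : ∀ a b : A, star (a * b) = star b * star a)
    (hstar_invol : ∀ a : A, star (star a) = a)
    {z : A} (hz : z ∈ Subalgebra.center K A) : star z ∈ Subalgebra.center K A := by
  rw [Subalgebra.mem_center_iff] at hz ⊢
  intro a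
  calc a * star z = star (star a) * star z := by rw [hstar_invol]
    _ = star (z * star a) := (hstar_mul _ _).symm
    _ = star (star a * z) := by rw [hz]
    _ = star z * star (star a) := hstar_mul _ _
    _ = star z * a := by rw [hstar_invol]

/-- A nonzero homogeneous central element is invertible, with central homogeneous inverse. -/
lemma aux_inv (star : A →ₗ[K] A)
    (hstar_mul : ∀ a b : A, star (a * b) = star b * star a)
    (hstar_invol : ∀ a : A, star (star a) = a)
    (hstar_deg : ∀ (n : ℤ), ∀ a ∈ 𝒜 n, star a ∈ 𝒜 (-n))
    (hdom : ∀ x ∈ Subalgebra.center K A, ∀ y ∈ Subalgebra.center K A,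
      x * y = 0 → x = 0 ∨ y = 0)
    (hfield : ∀ x ∈ Subalgebra.center K A, x ∈ 𝒜 0 → x ≠ 0 →
      ∃ y ∈ Subalgebra.center K A, y ∈ 𝒜 0 ∧ x * y = 1)
    {n : ℤ} {x : A} (hxc : x ∈ Subalgebra.center K A) (hxn : x ∈ 𝒜 n) (hx0 : x ≠ 0) :
    ∃ v ∈ Subalgebra.center K A, v ∈ 𝒜 (-n) ∧ x * v = 1 ∧ v * x = 1 := by
  have hsc : star x ∈ Subalgebra.center K A :=
    aux_star_central star hstar_mul hstar_invol hxc
  have hsn : star x ∈ 𝒜 (-n) := hstar_deg n x hxn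
  have hs0 : star x ≠ 0 := fun h => hx0 (by rw [← hstar_invol x, h, map_zero])
  have ht0 : x * star x ≠ 0 := by
    intro h
    rcases hdom x hxc (star x) hsc h with h | h
    exacts [hx0 h, hs0 h]
  have htc : x * star x ∈ Subalgebra.center K A := mul_mem hxc hsc
  have htd : x * star x ∈ 𝒜 0 := by
    have h := SetLike.mul_mem_graded hxn hsn
    simpa using h
  obtain ⟨y, hyc, hyd, hy⟩ := hfield _ htc htd ht0
  have hvd : star x * y ∈ 𝒜 (-n) := by
    have h := SetLike.mul_mem_graded hsn hyd
    simpa using h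
  have hxv : x * (star x * y) = 1 := by rw [← mul_assoc]; exact hy
  refine ⟨star x * y, mul_mem hsc hyc, hvd, hxv, ?_⟩
  rw [Subalgebra.mem_center_iff] at hxc
  rw [hxc (star x * y)]
  exact hxv

/-- Powers of a central unit are central. -/
lemma aux_unit_central (u : Aˣ) (hc : (u : A) ∈ Subalgebra.center K A) :
    ∀ i : ℤ, ((u ^ i : Aˣ) : A) ∈ Subalgebra.center K A := by
  have hinv : ((u⁻¹ : Aˣ) : A) ∈ Subalgebra.center K A := by
    rw [Subalgebra.mem_center_iff] at hc ⊢
    intro b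
    calc b * ((u⁻¹ : Aˣ) : A)
        = ((u⁻¹ : Aˣ) : A) * ((u : A) * b) * ((u⁻¹ : Aˣ) : A) := by
          rw [← mul_assoc, Units.inv_mul, one_mul]
      _ = ((u⁻¹ : Aˣ) : A) * (b * (u : A)) * ((u⁻¹ : Aˣ) : A) := by rw [← hc b]
      _ = ((u⁻¹ : Aˣ) : A) * b := by
          rw [mul_assoc, mul_assoc, Units.mul_inv, mul_one]
  intro i
  induction i using Int.induction_on with
  | zero => simpa using (Subalgebra.center K A).one_mem
  | succ k ih =>
      rw [zpow_add_one, Units.val_mul]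
      exact mul_mem ih hc
  | pred k ih =>
      rw [zpow_sub_one, Units.val_mul]
      exact mul_mem ih hinv

/-- Powers of a homogeneous unit are homogeneous. -/
lemma aux_zpow_mem {d : ℤ} (u : Aˣ) (hu : (u : A) ∈ 𝒜 d)
    (hv : ((u⁻¹ : Aˣ) : A) ∈ 𝒜 (-d)) :
    ∀ i : ℤ, ((u ^ i : Aˣ) : A) ∈ 𝒜 (d * i) := by
  intro i
  induction i using Int.induction_on with
  | zero => simpa using SetLike.one_mem_graded 𝒜
  | succ k ih =>
      have h := SetLike.mul_mem_graded ih hu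
      have he : d * ((k : ℤ) + 1) = d * k + d := by ring
      rw [he, zpow_add_one, Units.val_mul]
      exact h
  | pred k ih =>
      have h := SetLike.mul_mem_graded ih hv
      have he : d * (-(k : ℤ) - 1) = d * (-(k : ℤ)) + -d := by ring
      rw [he, zpow_sub_one, Units.val_mul]
      exact h

end Aux

/-- Let `A = ⊕ₙ Aₙ` be a ℤ-graded algebra with an involution `*` such that
`Aₙ* = A₋ₙ`, and let `Z = Z(A)` with the induced grading `Zₙ = Z ∩ Aₙ`.  Assume `Z` is a
domain and `Z₀` is a field.  Then every nonzero component `Zₙ` is a one-dimensional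
`Z₀`-vector space (hence isomorphic to `Z₀`), and either `Z = Z₀`, or `Z` is isomorphic, as
a graded algebra, to the Laurent polynomial algebra `Z₀[x, x⁻¹]`: there is a central
invertible homogeneous element `u` of minimal positive degree `d` such that every nonzero
homogeneous central element has degree `d·i` for some `i : ℤ` and equals `a·uⁱ` with
`a ∈ Z₀`. -/
theorem stmt15 (K : Type) [Field K] (A : Type) [Ring A] [Algebra K A]
    (𝒜 : ℤ → Submodule K A) [GradedAlgebra 𝒜]
    (star : A →ₗ[K] A)
    (hstar_mul : ∀ a b : A, star (a * b) = star b * star a)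
    (hstar_invol : ∀ a : A, star (star a) = a)
    (hstar_deg : ∀ (n : ℤ), ∀ a ∈ 𝒜 n, star a ∈ 𝒜 (-n))
    (hdom : ∀ x ∈ Subalgebra.center K A, ∀ y ∈ Subalgebra.center K A,
      x * y = 0 → x = 0 ∨ y = 0)
    (hfield : ∀ x ∈ Subalgebra.center K A, x ∈ 𝒜 0 → x ≠ 0 →
      ∃ y ∈ Subalgebra.center K A, y ∈ 𝒜 0 ∧ x * y = 1) :
    (∀ n : ℤ, (∃ x ∈ Subalgebra.center K A, x ∈ 𝒜 n ∧ x ≠ 0) →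
      ∃ x ∈ Subalgebra.center K A, x ∈ 𝒜 n ∧ x ≠ 0 ∧
        ∀ y ∈ Subalgebra.center K A, y ∈ 𝒜 n →
          ∃ a ∈ Subalgebra.center K A, a ∈ 𝒜 0 ∧ y = a * x) ∧
    ((∀ z ∈ Subalgebra.center K A, z ∈ 𝒜 0) ∨
      ∃ d : ℤ, 0 < d ∧
        (∀ n : ℤ, 0 < n → n < d → ∀ z ∈ Subalgebra.center K A, z ∈ 𝒜 n → z = 0) ∧
        ∃ u : Aˣ, (u : A) ∈ Subalgebra.center K A ∧ (u : A) ∈ 𝒜 d ∧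
          ∀ z ∈ Subalgebra.center K A, ∀ n : ℤ, z ∈ 𝒜 n → z ≠ 0 →
            ∃ i : ℤ, n = d * i ∧
              ∃ a ∈ Subalgebra.center K A, a ∈ 𝒜 0 ∧ z = a * ((u ^ i : Aˣ) : A)) := by
  classical
  constructor
  · -- Part 1
    rintro n ⟨x, hxc, hxn, hx0⟩
    obtain ⟨v, hvc, hvd, hxv, hvx⟩ :=
      aux_inv 𝒜 star hstar_mul hstar_invol hstar_deg hdom hfield hxc hxn hx0
    refine ⟨x, hxc, hxn, hx0, fun y hyc hyn => ?_⟩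
    refine ⟨y * v, mul_mem hyc hvc, ?_, ?_⟩
    · have h := SetLike.mul_mem_graded hyn hvd
      simpa using h
    · rw [mul_assoc, hvx, mul_one]
  · -- Part 2
    by_cases hS : ∀ n : ℤ, n ≠ 0 → ∀ z ∈ Subalgebra.center K A, z ∈ 𝒜 n → z = 0
    · left
      intro z hz
      rw [← DirectSum.sum_support_decompose 𝒜 z]
      apply Submodule.sum_mem
      intro i _
      by_cases hi : i = 0
      · subst hi; exact (DirectSum.decompose 𝒜 z 0).2
      · rw [hS i hi _ (aux_comp_central 𝒜 hz i) (DirectSum.decompose 𝒜 z i).2]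
        exact (𝒜 0).zero_mem
    · right
      push_neg at hS
      have hex : ∃ k : ℕ, 0 < k ∧ ∃ z, z ∈ Subalgebra.center K A ∧ z ∈ 𝒜 (k : ℤ) ∧ z ≠ 0 := by
        obtain ⟨n, hn0, z, hzc, hzn, hz0⟩ := hS
        rcases lt_or_gt_of_ne hn0 with h | h
        · refine ⟨(-n).toNat, by omega, star z,
            aux_star_central star hstar_mul hstar_invol hzc, ?_, ?_⟩
          · have hd := hstar_deg n z hzn
            rwa [Int.toNat_of_nonneg (by omega : (0:ℤ) ≤ -n)]
          · intro hc; exact hz0 (by rw [← hstar_invol z, hc, map_zero])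
        · refine ⟨n.toNat, by omega, z, hzc, ?_, hz0⟩
          rwa [Int.toNat_of_nonneg (by omega : (0:ℤ) ≤ n)]
      set d₀ := Nat.find hex with hd₀
      obtain ⟨hd₀pos, u0, hu0c, hu0d, hu0ne⟩ := Nat.find_spec hex
      have hdpos : (0:ℤ) < (d₀ : ℤ) := by exact_mod_cast hd₀pos
      -- minimality
      have hmin : ∀ n : ℤ, 0 < n → n < (d₀:ℤ) → ∀ z ∈ Subalgebra.center K A, z ∈ 𝒜 n → z = 0 := by
        intro n hn1 hn2 z hzc hzn
        by_contra hz0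
        have hP : 0 < n.toNat ∧ ∃ w, w ∈ Subalgebra.center K A ∧ w ∈ 𝒜 ((n.toNat : ℤ)) ∧ w ≠ 0 := by
          refine ⟨by omega, z, hzc, ?_, hz0⟩
          rwa [Int.toNat_of_nonneg (by omega : (0:ℤ) ≤ n)]
        exact Nat.find_min hex (by omega : n.toNat < d₀) hP
      -- the unit
      obtain ⟨v, hvc, hvd, hxv, hvx⟩ :=
        aux_inv 𝒜 star hstar_mul hstar_invol hstar_deg hdom hfield hu0c hu0d hu0ne
      set u : Aˣ := ⟨u0, v, hxv, hvx⟩ with hu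
      have huval : (u : A) = u0 := rfl
      have huinv : ((u⁻¹ : Aˣ) : A) = v := rfl
      have hupow : ∀ i : ℤ, ((u ^ i : Aˣ) : A) ∈ 𝒜 ((d₀:ℤ) * i) :=
        aux_zpow_mem 𝒜 u (by rw [huval]; exact hu0d) (by rw [huinv]; exact hvd)
      have hucen : ∀ i : ℤ, ((u ^ i : Aˣ) : A) ∈ Subalgebra.center K A :=
        aux_unit_central u (by rw [huval]; exact hu0c)
      refine ⟨(d₀:ℤ), hdpos, hmin, u, by rw [huval]; exact hu0c, by rw [huval]; exact hu0d, ?_⟩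
      intro z hzc n hzn hz0
      have : Nontrivial A := ⟨⟨z, 0, hz0⟩⟩
      set q : ℤ := n / (d₀:ℤ) with hq
      set r : ℤ := n % (d₀:ℤ) with hr
      have hrq : n = (d₀:ℤ) * q + r := by rw [hq, hr]; exact (Int.mul_ediv_add_emod n (d₀:ℤ)).symm
      have hr0 : 0 ≤ r := Int.emod_nonneg n (by omega)
      have hrd : r < (d₀:ℤ) := Int.emod_lt_of_pos n hdpos
      -- the element z * u^(-q)
      have hwc : z * ((u ^ (-q) : Aˣ) : A) ∈ Subalgebra.center K A :=
        mul_mem hzc (hucen (-q))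
      have hwd : z * ((u ^ (-q) : Aˣ) : A) ∈ 𝒜 r := by
        have h := SetLike.mul_mem_graded hzn (hupow (-q))
        have he : n + (d₀:ℤ) * (-q) = r := by rw [hrq]; ring
        rwa [he] at h
      have hw0 : z * ((u ^ (-q) : Aˣ) : A) ≠ 0 := by
        intro h
        rcases hdom z hzc _ (hucen (-q)) h with h | h
        · exact hz0 h
        · exact Units.ne_zero _ h
      have hreq : r = 0 := by
        by_contra hrne
        exact hw0 (hmin r (by omega) hrd _ hwc hwd)
      refine ⟨q, by rw [hrq, hreq, add_zero], z * ((u ^ (-q) : Aˣ) : A), hwc,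
        by rwa [hreq] at hwd, ?_⟩
      rw [mul_assoc, ← Units.val_mul, ← zpow_add, neg_add_cancel, zpow_zero,
        Units.val_one, mul_one]
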